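/- arXiv:1908.05025 — 6 statements merged into one kernel-verified Lean document; each statement's English description precedes it below -/
import Mathlib

section
/- For a ∈ (0,1) and ĉ > 0, the function f(z) = ((z - √(z² - 4(1-a)))/2)·(ĉ - z) is decreasing on the interval [2√(1-a), ĉ]. -/
theorem stmt_3 (a chat : ℝ) (ha : 0 < a) (ha1 : a < 1) (hc : 2 * Real.sqrt (1 - a) < chat) :
    AntitoneOn (fun z : ℝ => (z - Real.sqrt (z ^ 2 - 4 * (1 - a))) / 2 * (chat - z))
      (Set.Icc (2 * Real.sqrt (1 - a)) chat) := by
  have h1a : (0:ℝ) < 1 - a := by linarith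
  have hs : Real.sqrt (1 - a) > 0 := Real.sqrt_pos.mpr h1a
  have hsq : Real.sqrt (1 - a) ^ 2 = 1 - a := Real.sq_sqrt h1a.le
  -- key facts for z in the interval
  have hzsq : ∀ z : ℝ, 2 * Real.sqrt (1 - a) ≤ z → 0 ≤ z ^ 2 - 4 * (1 - a) := by
    intro z hz
    have hz0 : 0 ≤ z := le_trans (by positivity) hz
    nlinarith [sq_nonneg (z - 2 * Real.sqrt (1 - a))]
  have hle : ∀ z : ℝ, 2 * Real.sqrt (1 - a) ≤ z → Real.sqrt (z ^ 2 - 4 * (1 - a)) ≤ z := by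
    intro z hz
    have hz0 : 0 ≤ z := le_trans (by positivity) hz
    have : Real.sqrt (z ^ 2 - 4 * (1 - a)) ≤ Real.sqrt (z ^ 2) :=
      Real.sqrt_le_sqrt (by nlinarith)
    rwa [Real.sqrt_sq hz0] at this
  -- g z * h z = 4(1-a)
  have hmul : ∀ z : ℝ, 2 * Real.sqrt (1 - a) ≤ z →
      (z - Real.sqrt (z ^ 2 - 4 * (1 - a))) * (z + Real.sqrt (z ^ 2 - 4 * (1 - a)))
        = 4 * (1 - a) := by
    intro z hz
    have h := Real.sq_sqrt (hzsq z hz)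
    linear_combination -h
  intro x hx y hy hxy
  simp only [Set.mem_Icc] at hx hy
  have hx0 : 0 < x := lt_of_lt_of_le (by positivity) hx.1
  have hgx0 : 0 ≤ x - Real.sqrt (x ^ 2 - 4 * (1 - a)) := by
    have := hle x hx.1
    linarith
  have hgy0 : 0 ≤ y - Real.sqrt (y ^ 2 - 4 * (1 - a)) := by
    have := hle y (le_trans hx.1 hxy)
    linarith
  have hhx : 0 < x + Real.sqrt (x ^ 2 - 4 * (1 - a)) :=
    lt_of_lt_of_le hx0 (le_add_of_nonneg_right (Real.sqrt_nonneg _))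
  have hhy : 0 < y + Real.sqrt (y ^ 2 - 4 * (1 - a)) := by
    have hy0 : 0 < y := lt_of_lt_of_le hx0 hxy
    exact lt_of_lt_of_le hy0 (le_add_of_nonneg_right (Real.sqrt_nonneg _))
  have hhle : x + Real.sqrt (x ^ 2 - 4 * (1 - a)) ≤ y + Real.sqrt (y ^ 2 - 4 * (1 - a)) := by
    have : Real.sqrt (x ^ 2 - 4 * (1 - a)) ≤ Real.sqrt (y ^ 2 - 4 * (1 - a)) :=
      Real.sqrt_le_sqrt (by nlinarith)
    linarith
  -- g y ≤ g x
  have hgle : y - Real.sqrt (y ^ 2 - 4 * (1 - a)) ≤ x - Real.sqrt (x ^ 2 - 4 * (1 - a)) := by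
    have hx' := hmul x hx.1
    have hy' := hmul y (le_trans hx.1 hxy)
    nlinarith [mul_le_mul_of_nonneg_left hhle hgy0]
  have hcx : 0 ≤ chat - y := by linarith [hy.2]
  dsimp only
  calc (y - Real.sqrt (y ^ 2 - 4 * (1 - a))) / 2 * (chat - y)
      ≤ (x - Real.sqrt (x ^ 2 - 4 * (1 - a))) / 2 * (chat - x) := by
        apply mul_le_mul (by linarith) (by linarith) hcx (by linarith)
end

section
/- Let c₁ > 0, a ∈ (0,1), t > 0, x ∈ ℝ with c₁ - 2√a ≤ x/t < c₁. Then the infimum over τ ∈ [0,t) of F(τ) = (x - c₁τ)²/(4(t-τ)) - (1-a)(t-τ) + τ(c₁²/4 - 1) equals (c₁/2 - √a)(x - c̄t), where c̄ = c₁/2 - √a + (1-a)/(c₁/2 - √a). -/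
theorem stmt_7 (a c₁ t x : ℝ) (ha : 0 < a) (ha1 : a < 1)
    (hc : 2 * Real.sqrt a < c₁) (ht : 0 < t)
    (hx1 : (c₁ - 2 * Real.sqrt a) * t ≤ x) (hx2 : x < c₁ * t) :
    IsGLB ((fun τ : ℝ =>
        (x - c₁ * τ) ^ 2 / (4 * (t - τ)) - (1 - a) * (t - τ) + τ * (c₁ ^ 2 / 4 - 1))
        '' Set.Ico 0 t)
      ((c₁ / 2 - Real.sqrt a) *
        (x - (c₁ / 2 - Real.sqrt a + (1 - a) / (c₁ / 2 - Real.sqrt a)) * t)) := by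
  have hsa0 : 0 < Real.sqrt a := Real.sqrt_pos.mpr ha
  set sa := Real.sqrt a with hsa_def
  have hsa2 : a = sa * sa := (Real.mul_self_sqrt ha.le).symm
  have hb : 0 < c₁ / 2 - sa := by linarith
  set m := (c₁ / 2 - sa) * (x - (c₁ / 2 - sa + (1 - a) / (c₁ / 2 - sa)) * t) with hm
  have hm2 : m = (c₁ / 2 - sa) * x - (c₁ / 2 - sa) ^ 2 * t - (1 - a) * t := by
    have h2 : c₁ - 2 * sa ≠ 0 := ne_of_gt (by linarith)
    rw [hm]; field_simp; ring
  have hmem : m ∈ ((fun τ : ℝ =>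
      (x - c₁ * τ) ^ 2 / (4 * (t - τ)) - (1 - a) * (t - τ) + τ * (c₁ ^ 2 / 4 - 1))
      '' Set.Ico 0 t) := by
    refine ⟨t - (c₁ * t - x) / (2 * sa), ⟨?_, ?_⟩, ?_⟩
    · have h1 : c₁ * t - x ≤ 2 * sa * t := by nlinarith
      have h2 : (c₁ * t - x) / (2 * sa) ≤ t := by
        rw [div_le_iff₀ (by linarith)]; nlinarith
      linarith
    · have h1 : 0 < (c₁ * t - x) / (2 * sa) := div_pos (by linarith) (by linarith)
      linarith
    · have hd : t - (t - (c₁ * t - x) / (2 * sa)) = (c₁ * t - x) / (2 * sa) := by ring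
      simp only
      rw [hd, hm2, hsa2]
      have h0 : c₁ * t - x ≠ 0 := by nlinarith
      have hb' : c₁ / 2 - sa ≠ 0 := hb.ne'
      have hsa' : sa ≠ 0 := hsa0.ne'
      field_simp
      ring
  constructor
  · rintro v ⟨τ, ⟨hτ0, hτt⟩, rfl⟩
    have hs : 0 < t - τ := by linarith
    have key : (x - c₁ * τ) ^ 2 / (4 * (t - τ)) - (1 - a) * (t - τ) + τ * (c₁ ^ 2 / 4 - 1)
        = m + (x - c₁ * t + 2 * sa * (t - τ)) ^ 2 / (4 * (t - τ)) := by
      rw [hm2, hsa2]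
      have hs' : t - τ ≠ 0 := hs.ne'
      field_simp
      ring
    simp only [key]
    have : 0 ≤ (x - c₁ * t + 2 * sa * (t - τ)) ^ 2 / (4 * (t - τ)) :=
      div_nonneg (sq_nonneg _) (by linarith)
    linarith
  · intro w hw
    exact hw hmem
end

section
/- Let c₁ > 0, a ∈ (0,1), t > 0, x ∈ ℝ with 0 ≤ x/t < c₁ - 2√a. Then the function F(τ) = (x - c₁τ)²/(4(t-τ)) - (1-a)(t-τ) + τ(c₁²/4 - 1) on [0,t) attains its infimum at τ = 0, with value (t/4)(x²/t² - 4(1-a)). -/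
theorem stmt_8 (a c₁ t x : ℝ) (ha : 0 < a) (ha1 : a < 1)
    (hc : 2 * Real.sqrt a < c₁) (ht : 0 < t)
    (hx0 : 0 ≤ x) (hx : x < (c₁ - 2 * Real.sqrt a) * t) :
    (∀ τ ∈ Set.Ico (0 : ℝ) t,
        (x - c₁ * 0) ^ 2 / (4 * (t - 0)) - (1 - a) * (t - 0) + 0 * (c₁ ^ 2 / 4 - 1)
          ≤ (x - c₁ * τ) ^ 2 / (4 * (t - τ)) - (1 - a) * (t - τ) + τ * (c₁ ^ 2 / 4 - 1)) ∧
    (x - c₁ * 0) ^ 2 / (4 * (t - 0)) - (1 - a) * (t - 0) + 0 * (c₁ ^ 2 / 4 - 1)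
      = t / 4 * (x ^ 2 / t ^ 2 - 4 * (1 - a)) := by
  have hs : Real.sqrt a ^ 2 = a := Real.sq_sqrt ha.le
  have hs0 : 0 < Real.sqrt a := Real.sqrt_pos.2 ha
  constructor
  · intro τ hτ
    obtain ⟨hτ0, hτt⟩ := hτ
    have h1 : 0 < t - τ := by linarith
    have hkey : c₁ * t - x > 2 * Real.sqrt a * t := by nlinarith
    have h2 : (0:ℝ) < c₁ * t - x + 2 * Real.sqrt a * t := by nlinarith [mul_pos hs0 ht]
    have hsq : (x - c₁ * t) ^ 2 ≥ 4 * a * t ^ 2 := by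
      nlinarith [mul_pos (sub_pos.2 hkey) h2]
    rw [← sub_nonneg]
    have heq : (x - c₁ * τ) ^ 2 / (4 * (t - τ)) - (1 - a) * (t - τ) + τ * (c₁ ^ 2 / 4 - 1) -
        ((x - c₁ * 0) ^ 2 / (4 * (t - 0)) - (1 - a) * (t - 0) + 0 * (c₁ ^ 2 / 4 - 1)) =
        τ * ((x - c₁ * t) ^ 2 - 4 * a * t * (t - τ)) / (4 * t * (t - τ)) := by
      field_simp [ht.ne', h1.ne']
      ring
    rw [heq]
    apply div_nonneg _ (by positivity)
    apply mul_nonneg hτ0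
    nlinarith [mul_nonneg (mul_nonneg ha.le ht.le) hτ0]
  · field_simp [ht.ne']
    ring
end

section
/- Let a ∈ (0,1), c₁ > 2, c̄ = c₁/2 - √a + (1-a)/(c₁/2 - √a), and define w₁(t,x) = max{J₁(t,x), 0} with J₁ as in the explicit piecewise formula. If c₁/2 ∈ (1, √a + √(1-a)], then c̄ < c₁ and the zero set of w₁ on {t > 0} is exactly {(t,x) : t > 0, x ≤ c̄ t}. -/
noncomputable def J₁ (a c₁ : ℝ) (t x : ℝ) : ℝ :=
  if c₁ * t ≤ x then t / 4 * (x ^ 2 / t ^ 2 - 4)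
  else if (c₁ - 2 * Real.sqrt a) * t ≤ x then
    (c₁ / 2 - Real.sqrt a) *
      (x - (c₁ / 2 - Real.sqrt a + (1 - a) / (c₁ / 2 - Real.sqrt a)) * t)
  else if 0 ≤ x then t / 4 * (x ^ 2 / t ^ 2 - 4 * (1 - a))
  else -t * (1 - a)

noncomputable def w₁ (a c₁ : ℝ) (t x : ℝ) : ℝ := max (J₁ a c₁ t x) 0

set_option maxHeartbeats 1600000 in
theorem stmt_11 (a c₁ : ℝ) (ha : 0 < a) (ha1 : a < 1) (hc : 2 < c₁)
    (hc2 : c₁ / 2 ≤ Real.sqrt a + Real.sqrt (1 - a)) :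
    (c₁ / 2 - Real.sqrt a + (1 - a) / (c₁ / 2 - Real.sqrt a)) < c₁ ∧
    {p : ℝ × ℝ | 0 < p.1 ∧ w₁ a c₁ p.1 p.2 = 0}
      = {p : ℝ × ℝ | 0 < p.1 ∧
          p.2 ≤ (c₁ / 2 - Real.sqrt a + (1 - a) / (c₁ / 2 - Real.sqrt a)) * p.1} := by
  have hs2 : Real.sqrt a ^ 2 = a := Real.sq_sqrt ha.le
  have hr2 : Real.sqrt (1 - a) ^ 2 = 1 - a := Real.sq_sqrt (by linarith)
  have hs0 : 0 < Real.sqrt a := Real.sqrt_pos.2 ha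
  have hr0 : 0 < Real.sqrt (1 - a) := Real.sqrt_pos.2 (by linarith)
  have hs1 : Real.sqrt a < 1 := by nlinarith
  have hb : 0 < c₁ / 2 - Real.sqrt a := by linarith
  have hbr : c₁ / 2 - Real.sqrt a ≤ Real.sqrt (1 - a) := by linarith
  have hdiv : (1 - a) / (c₁ / 2 - Real.sqrt a) < c₁ / 2 + Real.sqrt a := by
    rw [div_lt_iff₀ hb]
    nlinarith [sq_nonneg (c₁ / 2 - 1)]
  have hcbar : c₁ / 2 - Real.sqrt a + (1 - a) / (c₁ / 2 - Real.sqrt a) < c₁ := by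
    linarith
  have h2b : 2 * (c₁ / 2 - Real.sqrt a)
      ≤ c₁ / 2 - Real.sqrt a + (1 - a) / (c₁ / 2 - Real.sqrt a) := by
    have : c₁ / 2 - Real.sqrt a ≤ (1 - a) / (c₁ / 2 - Real.sqrt a) := by
      rw [le_div_iff₀ hb]
      nlinarith [mul_le_mul hbr hbr hb.le hr0.le]
    linarith
  have hcbar0 : 0 < c₁ / 2 - Real.sqrt a + (1 - a) / (c₁ / 2 - Real.sqrt a) :=
    add_pos hb (div_pos (by linarith) hb)
  refine ⟨hcbar, ?_⟩
  ext ⟨t, x⟩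
  simp only [Set.mem_setOf_eq]
  refine and_congr_right fun ht => ?_
  have hw : w₁ a c₁ t x = 0 ↔ J₁ a c₁ t x ≤ 0 := max_eq_right_iff
  rw [hw]
  unfold J₁
  split_ifs with h1 h2 h3
  · -- x ≥ c₁ t : J₁ > 0 and x > c̄ t
    have ht2 : (0 : ℝ) < t ^ 2 := by positivity
    have hx2t : 2 * t < x := by
      nlinarith [mul_pos (sub_pos.2 hc) ht]
    have hx4 : (4 : ℝ) < x ^ 2 / t ^ 2 := by
      rw [lt_div_iff₀ ht2]
      nlinarith [mul_pos (show (0:ℝ) < x - 2 * t by linarith)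
        (show (0:ℝ) < x + 2 * t by linarith)]
    refine iff_of_false ?_ ?_
    · intro h
      nlinarith [mul_pos (show (0:ℝ) < t / 4 by linarith)
        (show (0:ℝ) < x ^ 2 / t ^ 2 - 4 by linarith)]
    · intro h
      have := mul_lt_mul_of_pos_right hcbar ht
      linarith
  · -- middle linear piece
    constructor
    · intro h
      by_contra hx
      push_neg at hx
      nlinarith [mul_pos hb (sub_pos.2 hx)]
    · intro h
      nlinarith [mul_nonneg hb.le
        (show (0:ℝ) ≤ (c₁ / 2 - Real.sqrt a + (1 - a) / (c₁ / 2 - Real.sqrt a)) * t - x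
          by linarith)]
  · -- 0 ≤ x < (c₁ - 2√a) t
    push_neg at h2
    have ht2 : (0 : ℝ) < t ^ 2 := by positivity
    have hxt : 0 ≤ (c₁ - 2 * Real.sqrt a) * t := le_of_lt (lt_of_le_of_lt h3 h2)
    refine iff_of_true ?_ ?_
    · have hB : (c₁ - 2 * Real.sqrt a) ^ 2 ≤ 4 * (1 - a) := by
        nlinarith [mul_le_mul hbr hbr hb.le hr0.le]
      have hx4 : x ^ 2 / t ^ 2 ≤ 4 * (1 - a) := by
        rw [div_le_iff₀ ht2]
        calc x ^ 2 ≤ ((c₁ - 2 * Real.sqrt a) * t) ^ 2 := pow_le_pow_left₀ h3 h2.le 2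
          _ = (c₁ - 2 * Real.sqrt a) ^ 2 * t ^ 2 := mul_pow _ _ _
          _ ≤ 4 * (1 - a) * t ^ 2 := mul_le_mul_of_nonneg_right hB (sq_nonneg t)
      exact mul_nonpos_iff.2 (Or.inl ⟨by linarith, by linarith⟩)
    · have h2bt := mul_le_mul_of_nonneg_right h2b ht.le
      linarith
  · -- x < 0
    push_neg at h3
    refine iff_of_true ?_ ?_
    · linarith [mul_pos ht (show (0:ℝ) < 1 - a by linarith)]
    · linarith [mul_nonneg hcbar0.le ht.le]
end

section
/- Let a ∈ (0,1), c₁ > 2 with c₁/2 > √a + √(1-a). Then c₁ - 2√a > 2√(1-a), and the zero set of w₁(t,x) = max{J₁(t,x),0} (with J₁ as in the explicit piecewise formula) on {t > 0} equals {(t,x) : t > 0, x ≤ 2√(1-a)·t}. -/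
set_option maxHeartbeats 1600000 in
theorem stmt_12 (a c₁ : ℝ) (ha : 0 < a) (ha1 : a < 1) (hc : 2 < c₁)
    (hc2 : Real.sqrt a + Real.sqrt (1 - a) < c₁ / 2) :
    2 * Real.sqrt (1 - a) < c₁ - 2 * Real.sqrt a ∧
    {p : ℝ × ℝ | 0 < p.1 ∧ w₁ a c₁ p.1 p.2 = 0}
      = {p : ℝ × ℝ | 0 < p.1 ∧ p.2 ≤ 2 * Real.sqrt (1 - a) * p.1} := by
  have h1a : (0:ℝ) < 1 - a := by linarith
  set s := Real.sqrt a with hs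
  set r := Real.sqrt (1 - a) with hr
  have hs0 : 0 < s := Real.sqrt_pos.mpr ha
  have hr0 : 0 < r := Real.sqrt_pos.mpr h1a
  have hs2 : s ^ 2 = a := Real.sq_sqrt ha.le
  have hr2 : r ^ 2 = 1 - a := Real.sq_sqrt h1a.le
  have hr1 : r < 1 := by nlinarith
  have hb : r < c₁ / 2 - s := by linarith
  have hb0 : (0:ℝ) < c₁ / 2 - s := by linarith
  refine ⟨by linarith, ?_⟩
  ext ⟨t, x⟩
  simp only [Set.mem_setOf_eq]
  constructor
  · rintro ⟨ht, hw⟩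
    refine ⟨ht, ?_⟩
    have hJ : J₁ a c₁ t x ≤ 0 := by
      by_contra h
      push_neg at h
      have h2 : w₁ a c₁ t x = J₁ a c₁ t x := max_eq_left h.le
      rw [hw] at h2; linarith
    unfold J₁ at hJ
    split_ifs at hJ with h1 h2 h3
    · exfalso
      have hA : x ^ 2 / t ^ 2 - 4 ≤ 0 := by
        by_contra h; push_neg at h
        nlinarith [mul_pos (by positivity : (0:ℝ) < t / 4) h]
      have hx2 : x ^ 2 ≤ 4 * t ^ 2 :=
        (div_le_iff₀ (by positivity)).mp (by linarith)
      have h2t : 2 * t < c₁ * t := by nlinarith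
      nlinarith [mul_pos (show (0:ℝ) < x - 2 * t by linarith)
        (show (0:ℝ) < x + 2 * t by linarith)]
    · exfalso
      have hxle : x - (c₁ / 2 - s + (1 - a) / (c₁ / 2 - s)) * t ≤ 0 := by
        by_contra h; push_neg at h
        nlinarith [mul_pos hb0 h]
      have hB : (1 - a) / (c₁ / 2 - s) * (c₁ / 2 - s) = 1 - a :=
        div_mul_cancel₀ _ (ne_of_gt hb0)
      have hBlt : (1 - a) / (c₁ / 2 - s) < c₁ / 2 - s := by nlinarith
      nlinarith [mul_lt_mul_of_pos_right hBlt ht]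
    · have hA : x ^ 2 / t ^ 2 - 4 * (1 - a) ≤ 0 := by
        by_contra h; push_neg at h
        nlinarith [mul_pos (by positivity : (0:ℝ) < t / 4) h]
      have hx2 : x ^ 2 ≤ 4 * (1 - a) * t ^ 2 := by
        have := (div_le_iff₀ (by positivity : (0:ℝ) < t ^ 2)).mp
          (show x ^ 2 / t ^ 2 ≤ 4 * (1 - a) by linarith)
        linarith
      exact le_of_pow_le_pow_left₀ two_ne_zero (by positivity)
        (show x ^ 2 ≤ (2 * r * t) ^ 2 by nlinarith)
    · push_neg at h3
      nlinarith [mul_pos hr0 ht]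
  · rintro ⟨ht, hx⟩
    refine ⟨ht, ?_⟩
    have hJ : J₁ a c₁ t x ≤ 0 := by
      unfold J₁
      split_ifs with h1 h2 h3
      · exfalso
        nlinarith [mul_lt_mul_of_pos_right hr1 ht, mul_lt_mul_of_pos_right hc ht]
      · exfalso
        nlinarith [mul_lt_mul_of_pos_right
          (show 2 * r < c₁ - 2 * s by linarith) ht]
      · apply mul_nonpos_of_nonneg_of_nonpos (by positivity)
        have hx2 : x ^ 2 ≤ 4 * (1 - a) * t ^ 2 := by
          nlinarith [mul_self_le_mul_self h3 hx]
        have := (div_le_iff₀ (by positivity : (0:ℝ) < t ^ 2)).mpr hx2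
        linarith
      · nlinarith [mul_pos ht h1a]
    exact max_eq_right hJ
end

section
/- Let a ∈ (0,1), ĉ > 2√(1-a), and let c_LLW ∈ [2√(1-a), ĉ), λ_LLW = (c_LLW - √(c_LLW² - 4(1-a)))/2, and for μ ∈ (0, λ_LLW(ĉ - c_LLW)) define λ(μ) = (ĉ - √(ĉ² - 4(μ+1-a)))/2 and c(μ) = λ(μ) + (1-a)/λ(μ). Then c(μ) > c_LLW. -/
set_option maxHeartbeats 1600000 in
theorem stmt_14 (a chat cLLW μ : ℝ) (ha : 0 < a) (ha1 : a < 1)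
    (hcLLW : 2 * Real.sqrt (1 - a) ≤ cLLW) (hcc : cLLW < chat)
    (lamLLW : ℝ)
    (hlamLLW : lamLLW = (cLLW - Real.sqrt (cLLW ^ 2 - 4 * (1 - a))) / 2)
    (hμ0 : 0 < μ) (hμ : μ < lamLLW * (chat - cLLW))
    (hdisc : 0 ≤ chat ^ 2 - 4 * (μ + 1 - a)) :
    cLLW < (chat - Real.sqrt (chat ^ 2 - 4 * (μ + 1 - a))) / 2
      + (1 - a) / ((chat - Real.sqrt (chat ^ 2 - 4 * (μ + 1 - a))) / 2) := by
  have h1a : 0 < 1 - a := by linarith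
  have hs : 0 ≤ Real.sqrt (1 - a) := Real.sqrt_nonneg _
  have hs2 : Real.sqrt (1 - a) ^ 2 = 1 - a := Real.sq_sqrt h1a.le
  have hs1pos : 0 < Real.sqrt (1 - a) := Real.sqrt_pos.mpr h1a
  have hc0 : 0 < cLLW := by nlinarith
  have hd1 : 0 ≤ cLLW ^ 2 - 4 * (1 - a) := by nlinarith
  set s1 := Real.sqrt (cLLW ^ 2 - 4 * (1 - a)) with hs1def
  set s2 := Real.sqrt (chat ^ 2 - 4 * (μ + 1 - a)) with hs2def
  have hs1sq : s1 ^ 2 = cLLW ^ 2 - 4 * (1 - a) := Real.sq_sqrt hd1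
  have hs2sq : s2 ^ 2 = chat ^ 2 - 4 * (μ + 1 - a) := Real.sq_sqrt hdisc
  have hs1nn : 0 ≤ s1 := Real.sqrt_nonneg _
  have hs2nn : 0 ≤ s2 := Real.sqrt_nonneg _
  set L := lamLLW
  set l := (chat - s2) / 2 with hldef
  -- basic identities
  have hL : L * (cLLW - L) = 1 - a := by
    rw [hlamLLW]; nlinarith [hs1sq]
  have hl : l * (chat - l) = μ + 1 - a := by
    rw [hldef]; nlinarith [hs2sq]
  have hLpos : 0 < L := by
    rw [hlamLLW]
    have : s1 < cLLW := by
      nlinarith [hs1sq, hs1nn]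
    linarith
  have hlpos : 0 < l := by
    rw [hldef]
    have hchat : 0 < chat := lt_trans hc0 hcc
    have : s2 < chat := by nlinarith [hs2sq, hs2nn]
    linarith
  have hLhalf : L ≤ cLLW / 2 := by rw [hlamLLW]; linarith [hs1nn]
  have hlhalf : l ≤ chat / 2 := by rw [hldef]; linarith [hs2nn]
  clear_value s1 s2 l L
  clear hs1def hs2def hldef hlamLLW hs1sq hs2sq hμ0 hdisc hd1 hcLLW hs hs2 hs1pos hs1nn hs2nn
  -- λ < L
  have hsum : L + l < chat := by linarith
  have hlt : l < L := by
    have hkey : l * (chat - l) < L * (chat - L) := by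
      have h2 : L * (chat - cLLW) + (1 - a) = L * (chat - L) := by linear_combination -hL
      linarith [hl, hμ]
    have hprod : 0 < (L - l) * (chat - (L + l)) := by
      calc (0:ℝ) < L * (chat - L) - l * (chat - l) := sub_pos.mpr hkey
        _ = (L - l) * (chat - (L + l)) := by ring
    rcases mul_pos_iff.mp hprod with ⟨h3, _⟩ | ⟨_, h4⟩
    · linarith
    · linarith
  have hfin : (cLLW - l) * l < 1 - a := by
    have hp : 0 < (L - l) * (cLLW - (L + l)) :=
      mul_pos (sub_pos.mpr hlt) (by linarith)
    have heq : L * (cLLW - L) - l * (cLLW - l) = (L - l) * (cLLW - (L + l)) := by ring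
    nlinarith [hp, heq, hL]
  have h7 : cLLW - l < (1 - a) / l := by
    rw [lt_div_iff₀ hlpos]; exact hfin
  linarith
end
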